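/- Let r : [0,1] → (−1,1)² be a Lipschitz continuous closed curve (r(0) = r(1)) with image γ, and let K > 0. Then there exists a constant C > 0 such that for every integer N ≥ 2, with h = 2/N and grid nodes (x_i, y_j) = (−1 + i h, −1 + j h) for 0 ≤ i, j ≤ N, the number of pairs (i,j) with dist((x_i,y_j), γ) ≤ K h is at most C N. -/

import Mathlib

open Set

noncomputable section

open scoped Classical

/-- Grid node `(x_i, y_j) = (-1 + i h, -1 + j h)` with `h = 2/N`. -/
def nodePt (N i j : ℕ) : ℝ × ℝ := (-1 + i * (2 / (N : ℝ)), -1 + j * (2 / (N : ℝ)))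

/-- The Euclidean distance from a point `z ∈ ℝ²` to the image `γ = r([0,1])` of a curve. -/
def distToCurve (r : ℝ → ℝ × ℝ) (z : ℝ × ℝ) : ℝ :=
  sInf ((fun t => Real.sqrt ((z.1 - (r t).1) ^ 2 + (z.2 - (r t).2) ^ 2)) '' Icc 0 1)

/-- Naturals `i` with `c ≤ i ≤ c + D` (as reals) lie in a length-`B` window when `D + 1 ≤ B`. -/
lemma nat_window {c : ℝ} {D : ℝ} {B : ℕ} (hDB : D + 1 ≤ B) {i : ℕ}
    (h1 : c ≤ i) (h2 : (i : ℝ) ≤ c + D) :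
    i ∈ Finset.Icc ⌊max c 0⌋₊ (⌊max c 0⌋₊ + B) := by
  have h0 : (0 : ℝ) ≤ i := Nat.cast_nonneg i
  have hlow : (⌊max c 0⌋₊ : ℝ) ≤ i := by
    calc (⌊max c 0⌋₊ : ℝ) ≤ max c 0 := Nat.floor_le (le_max_right _ _)
    _ ≤ i := max_le h1 h0
  have hup : (i : ℝ) < ((⌊max c 0⌋₊ + B : ℕ) : ℝ) := by
    have h3 : max c 0 < ⌊max c 0⌋₊ + 1 := Nat.lt_floor_add_one _
    have h4 : c ≤ max c 0 := le_max_left _ _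
    push_cast
    nlinarith
  rw [Finset.mem_Icc]
  constructor
  · exact_mod_cast hlow
  · have := Nat.cast_lt (α := ℝ) |>.mp hup
    omega

set_option maxHeartbeats 1600000 in
/-- For a Lipschitz closed curve `γ` in the open square `(-1,1)²` and `K > 0`, the number of
grid nodes within (Euclidean) distance `K h` is at most `C N`. -/
theorem stmt11 (r : ℝ → ℝ × ℝ) (L : NNReal) (hLip : LipschitzOnWith L r (Icc 0 1))
    (hcl : r 0 = r 1)
    (him : ∀ t ∈ Icc (0 : ℝ) 1, r t ∈ Ioo (-1 : ℝ) 1 ×ˢ Ioo (-1 : ℝ) 1)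
    (K : ℝ) (hK : 0 < K) :
    ∃ C > (0 : ℝ), ∀ N : ℕ, 2 ≤ N →
      (((Finset.range (N + 1) ×ˢ Finset.range (N + 1)).filter
          (fun ij => distToCurve r (nodePt N ij.1 ij.2) ≤ K * (2 / (N : ℝ)))).card : ℝ)
        ≤ C * N := by
  classical
  set B : ℕ := ⌈2 * K⌉₊ + 5 with hBdef
  set L' : ℕ := ⌈(L : ℝ)⌉₊ + 1 with hL'def
  refine ⟨((B + 1) ^ 2 * (2 * L') : ℝ), by positivity, ?_⟩
  intro N hN
  have hN0 : (0 : ℝ) < N := by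
    have : (2 : ℝ) ≤ N := by exact_mod_cast hN
    linarith
  set h : ℝ := 2 / (N : ℝ) with hhdef
  have hh : 0 < h := by positivity
  set M : ℕ := N * L' with hMdef
  have hM0 : 0 < M := by positivity
  have hMr : (0 : ℝ) < M := by exact_mod_cast hM0
  have hMcast : (M : ℝ) = (N : ℝ) * (L' : ℝ) := by rw [hMdef]; push_cast; ring
  set s := ((Finset.range (N + 1) ×ˢ Finset.range (N + 1)).filter
      (fun ij => distToCurve r (nodePt N ij.1 ij.2) ≤ K * (2 / (N : ℝ)))) with hsdef
  -- closeness predicate: node `ij` is within `(K+2)h` (coordinatewise) of sample point `k/M`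
  set close : ℕ × ℕ → ℕ → Prop := fun ij k =>
      |(nodePt N ij.1 ij.2).1 - (r ((k : ℝ) / M)).1| ≤ (K + 2) * h ∧
      |(nodePt N ij.1 ij.2).2 - (r ((k : ℝ) / M)).2| ≤ (K + 2) * h with hclosedef
  -- Key: every counted node is close to some sample point
  have keyA : ∀ ij ∈ s, ∃ k, k ≤ M ∧ close ij k := by
    intro ij hij
    rw [hsdef, Finset.mem_filter] at hij
    set p := nodePt N ij.1 ij.2 with hp
    have hd : distToCurve r p ≤ K * h := hij.2
    have hne : ((fun t => Real.sqrt ((p.1 - (r t).1) ^ 2 + (p.2 - (r t).2) ^ 2)) ''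
        Icc (0:ℝ) 1).Nonempty := (nonempty_Icc.mpr zero_le_one).image _
    obtain ⟨d, hdmem, hdlt⟩ := Real.lt_sInf_add_pos hne hh
    obtain ⟨t, ht, rfl⟩ := hdmem
    have hsqrt : Real.sqrt ((p.1 - (r t).1) ^ 2 + (p.2 - (r t).2) ^ 2) < (K + 1) * h := by
      have h1 : distToCurve r p + h ≤ K * h + h := by linarith
      calc Real.sqrt ((p.1 - (r t).1) ^ 2 + (p.2 - (r t).2) ^ 2)
          < distToCurve r p + h := hdlt
        _ ≤ K * h + h := h1
        _ = (K + 1) * h := by ring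
    have hco1 : |p.1 - (r t).1| < (K + 1) * h := by
      have h1 : |p.1 - (r t).1| ≤ Real.sqrt ((p.1 - (r t).1) ^ 2 + (p.2 - (r t).2) ^ 2) := by
        rw [← Real.sqrt_sq_eq_abs]
        exact Real.sqrt_le_sqrt (by nlinarith [sq_nonneg (p.2 - (r t).2)])
      linarith
    have hco2 : |p.2 - (r t).2| < (K + 1) * h := by
      have h1 : |p.2 - (r t).2| ≤ Real.sqrt ((p.1 - (r t).1) ^ 2 + (p.2 - (r t).2) ^ 2) := by
        rw [← Real.sqrt_sq_eq_abs]
        exact Real.sqrt_le_sqrt (by nlinarith [sq_nonneg (p.1 - (r t).1)])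
      linarith
    set k := ⌊t * M⌋₊ with hk
    have hkM : k ≤ M := by
      have htM : t * M ≤ M := by nlinarith [ht.1, ht.2]
      calc ⌊t * M⌋₊ ≤ ⌊(M : ℝ)⌋₊ := Nat.floor_mono htM
        _ = M := Nat.floor_natCast M
    have hk0 : (0 : ℝ) ≤ t * M := mul_nonneg ht.1 hMr.le
    have hkle : (k : ℝ) ≤ t * M := Nat.floor_le hk0
    have hklt : t * M < (k : ℝ) + 1 := Nat.lt_floor_add_one _
    have hkMmem : (k : ℝ) / M ∈ Icc (0 : ℝ) 1 := by
      constructor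
      · positivity
      · rw [div_le_one hMr]; exact_mod_cast hkM
    have hdt : dist t ((k : ℝ) / M) ≤ 1 / M := by
      rw [Real.dist_eq, abs_le]
      have hA : (k : ℝ) / M ≤ t := by rw [div_le_iff₀ hMr]; linarith
      have hB' : t - (k : ℝ) / M < 1 / M := by
        rw [sub_lt_iff_lt_add, ← add_div, lt_div_iff₀ hMr]
        linarith
      have h1M : (0 : ℝ) ≤ 1 / M := by positivity
      constructor <;> linarith
    have hrd : dist (r t) (r ((k : ℝ) / M)) ≤ h / 2 := by
      have hlips := hLip.dist_le_mul t ht ((k : ℝ) / M) hkMmem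
      have hLle : (L : ℝ) ≤ (L' : ℝ) := by
        have h1 := Nat.le_ceil (L : ℝ)
        have h2 : ((⌈(L : ℝ)⌉₊ : ℝ)) ≤ (L' : ℝ) := by
          rw [hL'def]; push_cast; linarith
        linarith
      have hLM : (L : ℝ) * (1 / M) ≤ h / 2 := by
        have h2N : h / 2 = 1 / (N : ℝ) := by rw [hhdef]; ring
        rw [h2N, mul_one_div, div_le_div_iff₀ hMr hN0, hMcast]
        nlinarith [L.coe_nonneg]
      have hmul : (L : ℝ) * dist t ((k : ℝ) / M) ≤ (L : ℝ) * (1 / M) :=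
        mul_le_mul_of_nonneg_left hdt L.coe_nonneg
      linarith
    have hc1 : |(r t).1 - (r ((k : ℝ) / M)).1| ≤ h / 2 := by
      have := le_max_left (dist (r t).1 (r ((k : ℝ) / M)).1)
        (dist (r t).2 (r ((k : ℝ) / M)).2)
      rw [← Prod.dist_eq] at this
      rw [← Real.dist_eq]; linarith
    have hc2 : |(r t).2 - (r ((k : ℝ) / M)).2| ≤ h / 2 := by
      have := le_max_right (dist (r t).1 (r ((k : ℝ) / M)).1)
        (dist (r t).2 (r ((k : ℝ) / M)).2)
      rw [← Prod.dist_eq] at this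
      rw [← Real.dist_eq]; linarith
    refine ⟨k, hkM, ?_, ?_⟩
    · calc |p.1 - (r ((k : ℝ) / M)).1|
          ≤ |p.1 - (r t).1| + |(r t).1 - (r ((k : ℝ) / M)).1| := abs_sub_le _ _ _
        _ ≤ (K + 1) * h + h / 2 := by linarith
        _ ≤ (K + 2) * h := by linarith
    · calc |p.2 - (r ((k : ℝ) / M)).2|
          ≤ |p.2 - (r t).2| + |(r t).2 - (r ((k : ℝ) / M)).2| := abs_sub_le _ _ _
        _ ≤ (K + 1) * h + h / 2 := by linarith
        _ ≤ (K + 2) * h := by linarith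
  -- the map to sample indices
  set f : ℕ × ℕ → ℕ := fun ij =>
    if hc : ∃ k, k ≤ M ∧ close ij k then hc.choose else 0 with hfdef
  have hfspec : ∀ ij ∈ s, f ij ≤ M ∧ close ij (f ij) := by
    intro ij hij
    have hc := keyA ij hij
    rw [hfdef]
    simp only [dif_pos hc]
    exact hc.choose_spec
  have hmaps : ∀ ij ∈ s, f ij ∈ Finset.range (M + 1) := by
    intro ij hij
    rw [Finset.mem_range]
    exact Nat.lt_succ_of_le (hfspec ij hij).1
  -- fiber bound
  have hfiber : ∀ k ∈ Finset.range (M + 1),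
      (s.filter (fun ij => f ij = k)).card ≤ (B + 1) ^ 2 := by
    intro k _
    set a := (r ((k : ℝ) / M)).1 with ha
    set b := (r ((k : ℝ) / M)).2 with hb
    set ca : ℝ := (a + 1) / h - (K + 2) with hca
    set cb : ℝ := (b + 1) / h - (K + 2) with hcb
    have hsub : (s.filter (fun ij => f ij = k)) ⊆
        Finset.Icc ⌊max ca 0⌋₊ (⌊max ca 0⌋₊ + B) ×ˢ
        Finset.Icc ⌊max cb 0⌋₊ (⌊max cb 0⌋₊ + B) := by
      intro ij hij
      rw [Finset.mem_filter] at hij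
      obtain ⟨hijs, hijk⟩ := hij
      have hcl' := (hfspec ij hijs).2
      rw [hijk] at hcl'
      obtain ⟨hcl1, hcl2⟩ := hcl'
      have hDB : 2 * (K + 2) + 1 ≤ (B : ℝ) := by
        have h1 := Nat.le_ceil (2 * K)
        rw [hBdef]; push_cast; linarith
      rw [Finset.mem_product]
      constructor
      · -- first coordinate
        have hnode : (nodePt N ij.1 ij.2).1 = -1 + ij.1 * h := rfl
        rw [hnode, abs_le] at hcl1
        refine nat_window hDB ?_ ?_
        · rw [hca, sub_le_iff_le_add, div_le_iff₀ hh]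
          nlinarith [hcl1.1]
        · have h1 : (ij.1 : ℝ) - (K + 2) ≤ (a + 1) / h := by
            rw [le_div_iff₀ hh]; nlinarith [hcl1.2]
          rw [hca]; linarith
      · -- second coordinate
        have hnode : (nodePt N ij.1 ij.2).2 = -1 + ij.2 * h := rfl
        rw [hnode, abs_le] at hcl2
        refine nat_window hDB ?_ ?_
        · rw [hcb, sub_le_iff_le_add, div_le_iff₀ hh]
          nlinarith [hcl2.1]
        · have h1 : (ij.2 : ℝ) - (K + 2) ≤ (b + 1) / h := by
            rw [le_div_iff₀ hh]; nlinarith [hcl2.2]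
          rw [hcb]; linarith
    calc (s.filter (fun ij => f ij = k)).card
        ≤ (Finset.Icc ⌊max ca 0⌋₊ (⌊max ca 0⌋₊ + B) ×ˢ
          Finset.Icc ⌊max cb 0⌋₊ (⌊max cb 0⌋₊ + B)).card := Finset.card_le_card hsub
      _ = (B + 1) ^ 2 := by
          have e : ∀ m : ℕ, m + B + 1 - m = B + 1 := fun m => by omega
          rw [Finset.card_product, Nat.card_Icc, Nat.card_Icc, e, e, sq]
  have hcount : s.card ≤ (B + 1) ^ 2 * (M + 1) := by
    have := Finset.card_le_mul_card_image_of_maps_to hmaps ((B + 1) ^ 2) hfiber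
    simpa [Finset.card_range] using this
  -- final arithmetic
  have hcast : (s.card : ℝ) ≤ ((B + 1) ^ 2 : ℝ) * ((M : ℝ) + 1) := by
    exact_mod_cast hcount
  have hL'1 : (1 : ℝ) ≤ (L' : ℝ) := by
    have h1 : 1 ≤ L' := by rw [hL'def]; omega
    exact_mod_cast h1
  have hN2 : (2 : ℝ) ≤ (N : ℝ) := by exact_mod_cast hN
  have hfin : ((M : ℝ) + 1) ≤ 2 * (L' : ℝ) * (N : ℝ) := by
    rw [hMcast]; nlinarith
  calc (s.card : ℝ) ≤ ((B + 1) ^ 2 : ℝ) * ((M : ℝ) + 1) := hcast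
    _ ≤ ((B + 1) ^ 2 : ℝ) * (2 * (L' : ℝ) * (N : ℝ)) := by
        apply mul_le_mul_of_nonneg_left hfin (by positivity)
    _ = ((B + 1) ^ 2 * (2 * L') : ℝ) * N := by push_cast; ring
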